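/- Let b_real, b_fake > 0 with e^{-b_real} + e^{-b_fake} > 1, and p, q > 0 satisfying 1 - e^{-b_fake} < p/(p+q) < e^{-b_real}. Then the minimum value of g(d) = p·h(-log d, b_real) + q·h(-log(1-d), b_fake) over (0,1) equals -p·log(p/(p+q)) - q·log(q/(p+q)), the same as the minimum of the unflooded BCE objective. -/

import Mathlib

open Real Set

noncomputable def flood (L b : ℝ) : ℝ := |L - b| + b

lemma flood_ge (L b : ℝ) : L ≤ flood L b := by
  have := le_abs_self (L - b)
  unfold flood; linarith

lemma flood_eq_of_le (L b : ℝ) (h : b ≤ L) : flood L b = L := by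
  unfold flood; rw [abs_of_nonneg (by linarith)]; ring

lemma bce_lower (p q d : ℝ) (hp : 0 < p) (hq : 0 < q) (hd0 : 0 < d) (hd1 : d < 1) :
    -(p * Real.log (p / (p + q))) - q * Real.log (q / (p + q)) ≤
      p * (-Real.log d) + q * (-Real.log (1 - d)) := by
  have hpq : 0 < p + q := by linarith
  have h1 : Real.log (d / (p / (p + q))) ≤ d / (p / (p + q)) - 1 :=
    Real.log_le_sub_one_of_pos (div_pos hd0 (div_pos hp hpq))
  have h2 : Real.log ((1 - d) / (q / (p + q))) ≤ (1 - d) / (q / (p + q)) - 1 :=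
    Real.log_le_sub_one_of_pos (div_pos (by linarith) (div_pos hq hpq))
  rw [Real.log_div hd0.ne' (div_pos hp hpq).ne'] at h1
  rw [Real.log_div (by linarith : (0:ℝ) < 1 - d).ne' (div_pos hq hpq).ne'] at h2
  have e1 : d / (p / (p + q)) = d * (p + q) / p := by field_simp
  have e2 : (1 - d) / (q / (p + q)) = (1 - d) * (p + q) / q := by field_simp
  rw [e1] at h1; rw [e2] at h2
  have k1 : p * (d * (p + q) / p - 1) = d * (p + q) - p := by field_simp
  have k2 : q * ((1 - d) * (p + q) / q - 1) = (1 - d) * (p + q) - q := by field_simp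
  have h1' := mul_le_mul_of_nonneg_left h1 hp.le
  have h2' := mul_le_mul_of_nonneg_left h2 hq.le
  rw [k1] at h1'
  rw [k2] at h2'
  nlinarith

theorem flooded_bce_min_value (breal bfake p q : ℝ)
    (hbr : 0 < breal) (hbf : 0 < bfake)
    (hsum : 1 < Real.exp (-breal) + Real.exp (-bfake))
    (hp : 0 < p) (hq : 0 < q)
    (hlo : 1 - Real.exp (-bfake) < p / (p + q))
    (hhi : p / (p + q) < Real.exp (-breal)) :
    IsLeast
      ((fun d => p * flood (-Real.log d) breal + q * flood (-Real.log (1 - d)) bfake) ''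
        Ioo (0:ℝ) 1)
      (-(p * Real.log (p / (p + q))) - q * Real.log (q / (p + q))) := by
  have hpq : 0 < p + q := by linarith
  have hdstar0 : 0 < p / (p + q) := div_pos hp hpq
  have hdstar1 : p / (p + q) < 1 := (div_lt_one hpq).mpr (by linarith)
  constructor
  · refine ⟨p / (p + q), ⟨hdstar0, hdstar1⟩, ?_⟩
    have hcompl : 1 - p / (p + q) = q / (p + q) := by field_simp; ring
    have hqstar0 : 0 < q / (p + q) := div_pos hq hpq
    -- -log(p/(p+q)) > breal
    have hlog1 : breal ≤ -Real.log (p / (p + q)) := by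
      have := Real.log_lt_log hdstar0 hhi
      rw [Real.log_exp] at this; linarith
    have hlog2 : bfake ≤ -Real.log (q / (p + q)) := by
      have hlt : q / (p + q) < Real.exp (-bfake) := by
        have h' : 1 - p / (p + q) < Real.exp (-bfake) := by linarith
        rwa [hcompl] at h'
      have := Real.log_lt_log hqstar0 hlt
      rw [Real.log_exp] at this; linarith
    show p * flood (-Real.log (p / (p + q))) breal +
        q * flood (-Real.log (1 - p / (p + q))) bfake = _
    rw [hcompl, flood_eq_of_le _ _ hlog1, flood_eq_of_le _ _ hlog2]
    ring
  · rintro x ⟨d, ⟨hd0, hd1⟩, rfl⟩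
    have h1 : -Real.log d ≤ flood (-Real.log d) breal := flood_ge _ _
    have h2 : -Real.log (1 - d) ≤ flood (-Real.log (1 - d)) bfake := flood_ge _ _
    have := bce_lower p q d hp hq hd0 hd1
    simp only
    nlinarith
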